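/- Let p^1(x,t) = (e^{−λt}/(c√(λπt³))) · ∑_{k=0}^∞ ((λ/(c²t))(c²t² − x²))^{k+1/2} · (k+1)/Γ(k+3/2) for |x| < ct, with λ, c, t > 0. Then for every even positive integer p, ∫_{−ct}^{ct} x^p · p^1(x,t) dx = (e^{−λt}/√π) · Γ((p+1)/2) · (ct)^p · [E_{1, p/2+1}(λt) − (p/2)·E_{1, p/2+2}(λt)], while for every odd positive integer p the integral equals 0. (These are the p-th moments of the random motion X_1(t).) -/

import Mathlib

open MeasureTheory Real
open Filter Topology intervalIntegral

/-- The Mittag-Leffler function `E_{a,b}(x) = ∑_k x^k / Γ(ak + b)`. -/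
noncomputable def mittagLeffler (a b x : ℝ) : ℝ :=
  ∑' k : ℕ, x ^ k / Real.Gamma (a * k + b)

/-- The unconditional density law of the random motion `X_1(t)`. -/
noncomputable def p1 (lam c t x : ℝ) : ℝ :=
  Real.exp (-lam * t) / (c * Real.sqrt (lam * π * t ^ 3)) *
    ∑' k : ℕ, (lam / (c ^ 2 * t) * (c ^ 2 * t ^ 2 - x ^ 2)) ^ ((k : ℝ) + 1 / 2) *
      ((k : ℝ) + 1) / Real.Gamma ((k : ℝ) + 3 / 2)

lemma summable1 (b x : ℝ) (hb : 0 < b) :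
    Summable (fun k : ℕ => ((k:ℝ)+1) * x ^ k / Real.Gamma ((k:ℝ) + b)) := by
  rcases eq_or_ne x 0 with rfl | hx
  · apply summable_of_ne_finset_zero (s := {0})
    intro k hk
    have hk0 : k ≠ 0 := by simpa using hk
    simp [zero_pow hk0]
  · have hG : ∀ k : ℕ, (0:ℝ) < Real.Gamma ((k:ℝ) + b) := fun k =>
      Real.Gamma_pos_of_pos (by positivity)
    apply summable_of_ratio_test_tendsto_lt_one (l := 0) one_pos
    · filter_upwards with n
      have := (hG n).ne'
      positivity
    · have key : ∀ n : ℕ,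
          ‖((n:ℝ)+1+1) * x ^ (n+1) / Real.Gamma (((n:ℝ)+1) + b)‖ /
            ‖((n:ℝ)+1) * x ^ n / Real.Gamma ((n:ℝ) + b)‖
          = |x| * (((n:ℝ)+2)/((n:ℝ)+1)) * (((n:ℝ)+b)⁻¹) := by
        intro n
        have h1 : Real.Gamma (((n:ℝ)+1) + b) = ((n:ℝ)+b) * Real.Gamma ((n:ℝ)+b) := by
          rw [show ((n:ℝ)+1) + b = ((n:ℝ)+b) + 1 by ring, Real.Gamma_add_one (by positivity)]
        have h2 : (0:ℝ) < (n:ℝ) + b := by positivity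
        rw [Real.norm_eq_abs, Real.norm_eq_abs, abs_div, abs_div, abs_mul, abs_mul,
          abs_of_pos (hG n), abs_of_pos (by rw [h1] at *; positivity : (0:ℝ) < Real.Gamma (((n:ℝ)+1)+b)),
          abs_of_pos (by positivity : (0:ℝ) < (n:ℝ)+1),
          abs_of_pos (by positivity : (0:ℝ) < (n:ℝ)+1+1), abs_pow, abs_pow, h1,
          pow_succ]
        have hxa : (0:ℝ) < |x| := abs_pos.mpr hx
        field_simp
        ring
      have : Tendsto (fun n : ℕ => |x| * (((n:ℝ)+2)/((n:ℝ)+1)) * (((n:ℝ)+b)⁻¹)) atTop (𝓝 0) := by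
        have hB : ∀ d : ℝ, Tendsto (fun n : ℕ => (((n:ℝ)+d)⁻¹)) atTop (𝓝 0) := fun d =>
          (tendsto_atTop_add_const_right atTop d tendsto_natCast_atTop_atTop).inv_tendsto_atTop
        have hA : Tendsto (fun n : ℕ => ((n:ℝ)+2)/((n:ℝ)+1)) atTop (𝓝 1) := by
          have he : (fun n : ℕ => ((n:ℝ)+2)/((n:ℝ)+1)) = fun n : ℕ => 1 + (((n:ℝ)+1))⁻¹ := by
            funext n
            have h : (0:ℝ) < (n:ℝ)+1 := by positivity
            field_simp
            ring
          rw [he]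
          simpa using tendsto_const_nhds.add (hB 1)
        simpa using ((tendsto_const_nhds.mul hA).mul (hB b))
      refine this.congr fun n => ?_
      rw [← key n]
      push_cast
      norm_num

lemma summable0 (b x : ℝ) (hb : 0 < b) :
    Summable (fun k : ℕ => x ^ k / Real.Gamma ((k:ℝ) + b)) := by
  have h := (summable1 b x hb).abs
  refine Summable.of_norm_bounded h fun k => ?_
  have hG : (0:ℝ) < Real.Gamma ((k:ℝ) + b) := Real.Gamma_pos_of_pos (by positivity)
  rw [Real.norm_eq_abs, abs_div, abs_div, abs_mul, abs_of_pos hG,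
    abs_of_pos (by positivity : (0:ℝ) < (k:ℝ)+1)]
  rw [abs_pow]
  gcongr
  nlinarith [pow_nonneg (abs_nonneg x) k, Nat.cast_nonneg (α := ℝ) k]

lemma beta_real {a b : ℝ} (ha : 0 < a) (hb : 0 < b) :
    ∫ x in (0:ℝ)..1, x ^ (a-1) * (1-x) ^ (b-1) =
      Real.Gamma a * Real.Gamma b / Real.Gamma (a+b) := by
  have h := Complex.Gamma_mul_Gamma_eq_betaIntegral (s := (a:ℂ)) (t := (b:ℂ))
    (by simpa using ha) (by simpa using hb)
  have hI : Complex.betaIntegral (a:ℂ) (b:ℂ) =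
      ((∫ x in (0:ℝ)..1, x ^ (a-1) * (1-x) ^ (b-1) : ℝ) : ℂ) := by
    rw [Complex.betaIntegral, ← intervalIntegral.integral_ofReal]
    apply intervalIntegral.integral_congr
    intro x hx
    rw [Set.uIcc_of_le (by norm_num : (0:ℝ) ≤ 1)] at hx
    obtain ⟨hx0, hx1⟩ := hx
    push_cast
    rw [Complex.ofReal_cpow hx0, Complex.ofReal_cpow (by linarith)]
    push_cast
    ring
  rw [hI, Complex.Gamma_ofReal, Complex.Gamma_ofReal, ← Complex.ofReal_add,
    Complex.Gamma_ofReal, ← Complex.ofReal_mul, ← Complex.ofReal_mul] at h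
  have := Complex.ofReal_inj.mp h
  have hG : Real.Gamma (a+b) ≠ 0 := (Real.Gamma_pos_of_pos (by linarith)).ne'
  field_simp [this]
  linarith [this]

lemma key_integral {A r : ℝ} (hA : 0 < A) (hr : 0 < r) {p : ℕ} (hp : 0 < p) (hep : Even p) :
    ∫ x in (-A)..A, (x:ℝ) ^ p * (A^2 - x^2) ^ r
      = A ^ ((p:ℝ) + 2*r + 1) *
        (Real.Gamma (((p:ℝ)+1)/2) * Real.Gamma (r+1) / Real.Gamma (((p:ℝ)+1)/2 + (r+1))) := by
  have hcont : Continuous (fun x : ℝ => x ^ p * (A^2 - x^2) ^ r) :=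
    (continuous_pow p).mul ((Real.continuous_rpow_const hr.le).comp
      (continuous_const.sub (continuous_pow 2)))
  -- even symmetry
  have heven : ∫ x in (-A)..A, (x:ℝ) ^ p * (A^2 - x^2) ^ r
      = 2 * ∫ x in (0:ℝ)..A, (x:ℝ) ^ p * (A^2 - x^2) ^ r := by
    have h1 : (∫ x in (-A)..(0:ℝ), (x:ℝ) ^ p * (A^2 - x^2) ^ r)
        = ∫ x in (0:ℝ)..A, (x:ℝ) ^ p * (A^2 - x^2) ^ r := by
      rw [show (∫ x in (-A)..(0:ℝ), (x:ℝ) ^ p * (A^2 - x^2) ^ r)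
          = ∫ x in (-A)..(-0:ℝ), (x:ℝ) ^ p * (A^2 - x^2) ^ r by norm_num,
        ← intervalIntegral.integral_comp_neg (a := 0) (b := A)
        (f := fun x : ℝ => x ^ p * (A^2 - x^2) ^ r)]
      apply intervalIntegral.integral_congr
      intro x _
      show (-x)^p * (A^2 - (-x)^2)^r = x^p * (A^2-x^2)^r
      rw [hep.neg_pow, neg_sq]
    rw [← intervalIntegral.integral_add_adjacent_intervals
      (hcont.intervalIntegrable (-A) 0) (hcont.intervalIntegrable 0 A), h1]
    ring
  set g : ℝ → ℝ := fun v => (A ^ ((p:ℝ)+2*r+1) / 2) * (v ^ (((p:ℝ)-1)/2) * (1-v) ^ r) with hg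
  have hp1 : (0:ℝ) ≤ ((p:ℝ)-1)/2 := by
    have : (1:ℝ) ≤ (p:ℝ) := by exact_mod_cast hp
    linarith
  have hgcont : Continuous g :=
    continuous_const.mul ((Real.continuous_rpow_const hp1).mul
      ((Real.continuous_rpow_const hr.le).comp (continuous_const.sub continuous_id)))
  have hsub : (∫ x in (0:ℝ)..A, (x:ℝ) ^ p * (A^2 - x^2) ^ r) = ∫ v in (0:ℝ)..1, g v := by
    have hchain : (∫ x in (0:ℝ)..A, (2*x/A^2) • g ((x/A)^2)) = ∫ v in (0:ℝ)..1, g v := by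
      have := intervalIntegral.integral_comp_smul_deriv (a := (0:ℝ)) (b := A)
        (f := fun x => (x/A)^2) (f' := fun x => 2*x/A^2) (g := g)
        (fun x _ => by
          have h := ((hasDerivAt_id x).div_const A).pow 2
          convert h using 1
          · rfl
          · rfl
          · funext y; simp
          norm_num
          rw [pow_two]
          field_simp) ((continuous_const.mul continuous_id).div_const _).continuousOn hgcont
      simpa [div_self hA.ne'] using this
    rw [← hchain]
    apply intervalIntegral.integral_congr
    intro x hx
    rw [Set.uIcc_of_le hA.le] at hx
    obtain ⟨hx0, hxA⟩ := hx
    rcases eq_or_lt_of_le hx0 with rfl | hx0'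
    · simp [hg, zero_pow hp.ne']
    · have hAx : (0:ℝ) ≤ A^2 - x^2 := by nlinarith
      have e1 : ((x/A)^2 : ℝ) ^ (((p:ℝ)-1)/2) = x ^ ((p:ℝ)-1) / A ^ ((p:ℝ)-1) := by
        rw [← Real.rpow_natCast (x/A) 2, ← Real.rpow_mul (by positivity),
          show ((2:ℕ):ℝ) * (((p:ℝ)-1)/2) = (p:ℝ)-1 by push_cast; ring,
          Real.div_rpow hx0 hA.le]
      have e2 : (1 - (x/A)^2) ^ r = (A^2 - x^2) ^ r / A ^ (2*r) := by
        rw [show 1 - (x/A)^2 = (A^2-x^2)/A^2 by field_simp,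
          Real.div_rpow hAx (by positivity), ← Real.rpow_natCast A 2,
          ← Real.rpow_mul hA.le, show ((2:ℕ):ℝ) * r = 2*r by push_cast; ring]
      have e3 : (x:ℝ) ^ p = x * x ^ ((p:ℝ)-1) := by
        calc (x:ℝ)^p = x ^ ((p:ℝ)) := (Real.rpow_natCast x p).symm
          _ = x ^ ((1:ℝ) + ((p:ℝ)-1)) := by norm_num
          _ = x ^ (1:ℝ) * x ^ ((p:ℝ)-1) := Real.rpow_add hx0' _ _
          _ = x * x ^ ((p:ℝ)-1) := by rw [Real.rpow_one]
      have e4 : A ^ ((p:ℝ)+2*r+1) = A^2 * (A^((p:ℝ)-1) * A^(2*r)) := by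
        rw [← Real.rpow_natCast A 2, ← Real.rpow_add hA, ← Real.rpow_add hA]
        norm_num
        ring_nf
      have hApos1 : (0:ℝ) < A ^ ((p:ℝ)-1) := Real.rpow_pos_of_pos hA _
      have hApos2 : (0:ℝ) < A ^ (2*r) := Real.rpow_pos_of_pos hA _
      simp only [hg, smul_eq_mul]
      rw [e1, e2, e3, e4]
      field_simp
  rw [heven, hsub]
  have hbeta := beta_real (a := ((p:ℝ)+1)/2) (b := r+1)
    (by positivity) (by linarith)
  rw [show ((p:ℝ)+1)/2-1 = ((p:ℝ)-1)/2 by ring, show r+1-1 = r by ring] at hbeta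
  rw [hg]
  rw [intervalIntegral.integral_const_mul, hbeta]
  ring

/-- The `p`-th moments of the random motion `X_1(t)`: for `p` even positive,
`∫_{−ct}^{ct} x^p p^1(x,t) dx
  = (e^{−λt}/√π) Γ((p+1)/2) (ct)^p [E_{1,p/2+1}(λt) − (p/2)E_{1,p/2+2}(λt)]`,
while for `p` odd positive the integral vanishes. -/
theorem stmt11 (lam c t : ℝ) (hlam : 0 < lam) (hc : 0 < c) (ht : 0 < t)
    (p : ℕ) (hp : 0 < p) :
    (Even p →
      ∫ x in (-(c * t))..(c * t), x ^ p * p1 lam c t x =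
        Real.exp (-lam * t) / Real.sqrt π * Real.Gamma (((p : ℝ) + 1) / 2) * (c * t) ^ p *
          (mittagLeffler 1 ((p : ℝ) / 2 + 1) (lam * t) -
            (p : ℝ) / 2 * mittagLeffler 1 ((p : ℝ) / 2 + 2) (lam * t))) ∧
    (Odd p → ∫ x in (-(c * t))..(c * t), x ^ p * p1 lam c t x = 0) := by
  have hA : 0 < c * t := by positivity
  have hu : 0 < lam / (c^2*t) := by positivity
  have hlt : 0 < lam * t := by positivity
  set A := c * t with hA'
  set u := lam / (c^2*t) with hu'
  set C := Real.exp (-lam * t) / (c * Real.sqrt (lam * π * t ^ 3)) with hC'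
  have huA : u * A^2 = lam * t := by
    rw [hu', hA']
    field_simp
  constructor
  · -- EVEN CASE
    intro hep
    set F : ℕ → ℝ → ℝ := fun k x =>
      x ^ p * ((u * (A^2 - x^2)) ^ ((k:ℝ) + 1/2) * ((k:ℝ) + 1) / Real.Gamma ((k:ℝ) + 3/2))
      with hF'
    have hGk : ∀ k : ℕ, (0:ℝ) < Real.Gamma ((k:ℝ) + 3/2) := fun k =>
      Real.Gamma_pos_of_pos (by positivity)
    -- pointwise identity
    have hpt : ∀ x : ℝ, x ^ p * p1 lam c t x = C * ∑' k, F k x := by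
      intro x
      rw [p1, ← hC']
      have h1 : ∀ k : ℕ,
          (lam / (c ^ 2 * t) * (c ^ 2 * t ^ 2 - x ^ 2)) ^ ((k : ℝ) + 1 / 2) *
            ((k : ℝ) + 1) / Real.Gamma ((k : ℝ) + 3 / 2)
          = (u * (A^2 - x^2)) ^ ((k:ℝ) + 1/2) * ((k:ℝ) + 1) / Real.Gamma ((k:ℝ) + 3/2) := by
        intro k
        rw [show lam / (c ^ 2 * t) * (c ^ 2 * t ^ 2 - x ^ 2) = u * (A^2 - x^2) by
          rw [hu', hA']; ring]
      rw [tsum_congr h1, hF']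
      show x ^ p * (C * ∑' k:ℕ, ((u * (A^2 - x^2)) ^ ((k:ℝ) + 1/2) * ((k:ℝ) + 1) /
          Real.Gamma ((k:ℝ) + 3/2)))
        = C * ∑' k:ℕ, x ^ p * ((u * (A^2 - x^2)) ^ ((k:ℝ) + 1/2) * ((k:ℝ) + 1) /
          Real.Gamma ((k:ℝ) + 3/2))
      rw [tsum_mul_left (a := x ^ p), ← mul_assoc, mul_comm (x ^ p) C, mul_assoc]
    -- bounds
    have hb : ∀ (k : ℕ) (x : ℝ), x ∈ Set.uIoc (-A) A →
        ‖F k x‖ ≤ A ^ p * ((lam*t) ^ ((k:ℝ)+1/2) * ((k:ℝ)+1) / Real.Gamma ((k:ℝ)+3/2)) := by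
      intro k x hx
      rw [Set.uIoc_of_le (by linarith)] at hx
      have hx1 : -A ≤ x := le_of_lt hx.1
      have hx2 : x ≤ A := hx.2
      have hs : (0:ℝ) ≤ A^2 - x^2 := by nlinarith
      have hs2 : A^2 - x^2 ≤ A^2 := by nlinarith
      have hF0 : 0 ≤ F k x := by
        rw [hF']
        have := hep.pow_nonneg (a := x)
        positivity
      rw [Real.norm_eq_abs, abs_of_nonneg hF0, hF']
      have hxp : x ^ p ≤ A ^ p := by
        rw [← hep.pow_abs]
        exact pow_le_pow_left₀ (abs_nonneg x) (abs_le.mpr ⟨hx1, hx2⟩) p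
      have hrp : (u * (A^2 - x^2)) ^ ((k:ℝ)+1/2) ≤ (lam*t) ^ ((k:ℝ)+1/2) := by
        rw [← huA]
        apply Real.rpow_le_rpow (by positivity) ?_ (by positivity)
        nlinarith [hu.le]
      apply mul_le_mul hxp ?_ (by positivity) (by positivity)
      exact (div_le_div_iff_of_pos_right (hGk k)).mpr
        (mul_le_mul_of_nonneg_right hrp (by positivity))
    have hbsum : Summable (fun k : ℕ =>
        A ^ p * ((lam*t) ^ ((k:ℝ)+1/2) * ((k:ℝ)+1) / Real.Gamma ((k:ℝ)+3/2))) := by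
      apply ((summable1 (3/2) (lam*t) (by norm_num)).mul_left
        (A ^ p * (lam*t) ^ ((1:ℝ)/2))).congr
      intro k
      rw [show (k:ℝ)+1/2 = (k:ℝ)+(1:ℝ)/2 by norm_num, Real.rpow_add hlt,
        Real.rpow_natCast]
      ring
    have hFcont : ∀ k : ℕ, Continuous (F k) := by
      intro k
      rw [hF']
      apply (continuous_pow p).mul
      apply Continuous.div_const
      apply Continuous.mul ?_ continuous_const
      apply Continuous.rpow_const
        (continuous_const.mul (continuous_const.sub (continuous_pow 2)))
      intro x
      right
      positivity
    have hsum_pt : ∀ x : ℝ, x ∈ Set.uIoc (-A) A → Summable fun k => F k x := by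
      intro x hx
      exact Summable.of_norm_bounded hbsum (fun k => hb k x hx)
    have hHasSum : HasSum (fun k => ∫ x in (-A)..A, F k x)
        (∫ x in (-A)..A, ∑' k, F k x) := by
      refine intervalIntegral.hasSum_integral_of_dominated_convergence
        (F := F) (f := fun x => ∑' k, F k x) (μ := volume) (a := -A) (b := A)
        (bound := fun (k : ℕ) (_ : ℝ) =>
          A ^ p * ((lam*t) ^ ((k:ℝ)+1/2) * ((k:ℝ)+1) / Real.Gamma ((k:ℝ)+3/2)))
        (fun k => (hFcont k).aestronglyMeasurable)
        (fun k => ae_of_all _ fun x hx => hb k x hx)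
        (ae_of_all _ fun x _ => hbsum)
        intervalIntegrable_const
        (ae_of_all _ fun x hx => (hsum_pt x hx).hasSum)
    -- compute each integral
    set K := A ^ ((p:ℝ)) * A * Real.sqrt (lam*t) * Real.Gamma (((p:ℝ)+1)/2) with hK'
    have hIk : ∀ k : ℕ, (∫ x in (-A)..A, F k x)
        = K * ((lam*t)^k * ((k:ℝ)+1) / Real.Gamma ((k:ℝ) + ((p:ℝ)/2+2))) := by
      intro k
      set e : ℝ := (k:ℝ) + 1/2 with he'
      have he : 0 < e := by positivity
      have step1 : (∫ x in (-A)..A, F k x)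
          = (u ^ e * ((k:ℝ)+1) / Real.Gamma ((k:ℝ)+3/2)) *
            ∫ x in (-A)..A, x ^ p * (A^2 - x^2) ^ e := by
        rw [← intervalIntegral.integral_const_mul]
        apply intervalIntegral.integral_congr
        intro x hx
        rw [Set.uIcc_of_le (by linarith)] at hx
        have hs : (0:ℝ) ≤ A^2 - x^2 := by nlinarith [hx.1, hx.2]
        show x ^ p * ((u * (A^2 - x^2)) ^ ((k:ℝ) + 1/2) * ((k:ℝ) + 1) / Real.Gamma ((k:ℝ) + 3/2))
          = u ^ e * ((k:ℝ)+1) / Real.Gamma ((k:ℝ)+3/2) * (x ^ p * (A^2 - x^2) ^ e)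
        rw [show (k:ℝ) + 1/2 = e from he'.symm, Real.mul_rpow hu.le hs]
        ring
      rw [step1, key_integral hA he hp hep]
      have f1 : Real.Gamma (e+1) = Real.Gamma ((k:ℝ)+3/2) := by
        rw [show e + 1 = (k:ℝ)+3/2 by rw [he']; ring]
      have f2 : Real.Gamma (((p:ℝ)+1)/2 + (e+1)) = Real.Gamma ((k:ℝ) + ((p:ℝ)/2+2)) := by
        rw [show ((p:ℝ)+1)/2 + (e+1) = (k:ℝ) + ((p:ℝ)/2+2) by rw [he']; ring]
      have f3 : u ^ e * A ^ ((p:ℝ)+2*e+1)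
          = A ^ ((p:ℝ)) * A * ((lam*t)^k * Real.sqrt (lam*t)) := by
        have g1 : A ^ ((p:ℝ)+2*e+1) = A ^ ((p:ℝ)) * A ^ (2*e) * A := by
          rw [Real.rpow_add hA ((p:ℝ)+2*e) 1, Real.rpow_add hA ((p:ℝ)) (2*e), Real.rpow_one]
        have g2 : u ^ e * A ^ (2*e) = (lam*t) ^ e := by
          rw [show (2:ℝ)*e = ((2:ℕ):ℝ)*e by norm_num, Real.rpow_natCast_mul hA.le,
            ← Real.mul_rpow hu.le (by positivity), huA]
        have g3 : (lam*t) ^ e = (lam*t)^k * Real.sqrt (lam*t) := by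
          rw [he', Real.rpow_add hlt, Real.rpow_natCast, ← Real.sqrt_eq_rpow]
        rw [g1, ← mul_assoc]
        rw [show u ^ e * (A ^ ((p:ℝ)) * A ^ (2*e)) = A ^ ((p:ℝ)) * (u ^ e * A ^ (2*e)) by ring]
        rw [g2, g3]
        ring
      rw [f1, f2]
      rw [show (u ^ e * ((k:ℝ)+1) / Real.Gamma ((k:ℝ)+3/2)) *
          (A ^ ((p:ℝ)+2*e+1) * (Real.Gamma (((p:ℝ)+1)/2) * Real.Gamma ((k:ℝ)+3/2) /
            Real.Gamma ((k:ℝ) + ((p:ℝ)/2+2))))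
        = (u ^ e * A ^ ((p:ℝ)+2*e+1)) * (((k:ℝ)+1) / Real.Gamma ((k:ℝ)+3/2)) *
            (Real.Gamma (((p:ℝ)+1)/2) * Real.Gamma ((k:ℝ)+3/2) /
            Real.Gamma ((k:ℝ) + ((p:ℝ)/2+2))) by ring]
      rw [f3, hK']
      have hG1 := (hGk k).ne'
      have hG2 := (Real.Gamma_pos_of_pos (show (0:ℝ) < (k:ℝ) + ((p:ℝ)/2+2) by positivity)).ne'
      field_simp
    -- sum identity
    have hterm : ∀ k : ℕ, K * ((lam*t)^k * ((k:ℝ)+1) / Real.Gamma ((k:ℝ) + ((p:ℝ)/2+2)))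
        = K * ((lam*t)^k / Real.Gamma ((k:ℝ) + ((p:ℝ)/2+1)))
          - K * ((p:ℝ)/2) * ((lam*t)^k / Real.Gamma ((k:ℝ) + ((p:ℝ)/2+2))) := by
      intro k
      have hpos : (0:ℝ) < (k:ℝ) + ((p:ℝ)/2+1) := by positivity
      have h1 : Real.Gamma ((k:ℝ) + ((p:ℝ)/2+2))
          = ((k:ℝ) + ((p:ℝ)/2+1)) * Real.Gamma ((k:ℝ) + ((p:ℝ)/2+1)) := by
        rw [show (k:ℝ) + ((p:ℝ)/2+2) = ((k:ℝ) + ((p:ℝ)/2+1)) + 1 by ring,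
          Real.Gamma_add_one hpos.ne']
      have hG1 := (Real.Gamma_pos_of_pos hpos).ne'
      rw [h1]
      field_simp
      ring
    have hML1 : mittagLeffler 1 ((p:ℝ)/2+1) (lam*t)
        = ∑' k : ℕ, (lam*t)^k / Real.Gamma ((k:ℝ) + ((p:ℝ)/2+1)) := by
      rw [mittagLeffler]
      exact tsum_congr fun k => by rw [one_mul]
    have hML2 : mittagLeffler 1 ((p:ℝ)/2+2) (lam*t)
        = ∑' k : ℕ, (lam*t)^k / Real.Gamma ((k:ℝ) + ((p:ℝ)/2+2)) := by
      rw [mittagLeffler]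
      exact tsum_congr fun k => by rw [one_mul]
    have hS1 := summable0 ((p:ℝ)/2+1) (lam*t) (by positivity)
    have hS2 := summable0 ((p:ℝ)/2+2) (lam*t) (by positivity)
    -- assemble
    rw [intervalIntegral.integral_congr (g := fun x => C * ∑' k, F k x)
        (fun x _ => hpt x),
      intervalIntegral.integral_const_mul, ← hHasSum.tsum_eq]
    rw [tsum_congr hIk, tsum_congr hterm,
      Summable.tsum_sub ((hS1.mul_left K).congr fun k => rfl)
        (((hS2.mul_left (K * ((p:ℝ)/2))).congr fun k => rfl))]
    rw [tsum_mul_left, tsum_mul_left, ← hML1, ← hML2]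
    -- final constant identity
    have hsq : Real.sqrt (lam * π * t^3) = Real.sqrt (lam*t) * Real.sqrt π * t := by
      rw [show lam * π * t^3 = ((lam*t) * π) * t^2 by ring,
        Real.sqrt_mul (by positivity), Real.sqrt_mul hlt.le, Real.sqrt_sq ht.le]
    have hspos : (0:ℝ) < Real.sqrt (lam*t) := Real.sqrt_pos.mpr hlt
    have hppos : (0:ℝ) < Real.sqrt π := Real.sqrt_pos.mpr Real.pi_pos
    have hCK : C * K = Real.exp (-lam * t) / Real.sqrt π *
        Real.Gamma (((p:ℝ)+1)/2) * (c*t)^p := by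
      rw [hC', hK', hsq, hA', Real.rpow_natCast]
      field_simp
    rw [show C * (K * mittagLeffler 1 ((p:ℝ)/2+1) (lam*t)
          - K * ((p:ℝ)/2) * mittagLeffler 1 ((p:ℝ)/2+2) (lam*t))
        = (C * K) * (mittagLeffler 1 ((p:ℝ)/2+1) (lam*t)
          - (p:ℝ)/2 * mittagLeffler 1 ((p:ℝ)/2+2) (lam*t)) by ring, hCK]
  · -- ODD CASE
    intro hodd
    have hpe : ∀ x : ℝ, p1 lam c t (-x) = p1 lam c t x := by
      intro x
      rw [p1, p1, neg_sq]
    have h := intervalIntegral.integral_comp_neg (a := -A) (b := A)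
      (f := fun x => x ^ p * p1 lam c t x)
    simp only [neg_neg] at h
    have h2 : ∀ x : ℝ, (-x) ^ p * p1 lam c t (-x) = -(x ^ p * p1 lam c t x) := by
      intro x
      rw [hodd.neg_pow, hpe]
      ring
    simp_rw [h2] at h
    rw [intervalIntegral.integral_neg] at h
    linarith
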